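/- Let F be a nonempty family of holomorphic injective functions f : 𝔻 → ℂ with f(0) = 0 and f'(0) = 1, closed under omitted-value Möbius compositions: whenever f ∈ F and c ∈ ℂ \ f(𝔻), the function z ↦ c·f(z)/(c − f(z)) also belongs to F. Set A = sup_{f ∈ F} |f''(0)/2| and assume 0 < A < ∞. If some f ∈ F omits a value c with |c| = 1/(2A) (i.e., c ∉ f(𝔻)), then |f''(0)/2| = A, i.e., f is a maximizing function for the second coefficient in F. -/

import Mathlib

open Complex Metric

/-- Lemma 1 (sharpness, 'only if' direction): in a Möbius-closed family `F` as above with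
`A = sup_{f ∈ F} |a₂(f)|`, `0 < A < ∞`, if some `f ∈ F` omits a value `c` with
`|c| = 1/(2A)`, then `|a₂(f)| = A`, i.e. `f` maximizes the second coefficient. -/
theorem omitted_value_on_critical_circle (F : Set (ℂ → ℂ)) (hne : F.Nonempty)
    (hF : ∀ f ∈ F, DifferentiableOn ℂ f (ball (0 : ℂ) 1) ∧
      Set.InjOn f (ball (0 : ℂ) 1) ∧ f 0 = 0 ∧ deriv f 0 = 1)
    (hclosed : ∀ f ∈ F, ∀ c ∉ f '' ball (0 : ℂ) 1,
      (fun z => c * f z / (c - f z)) ∈ F)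
    (A : ℝ) (hApos : 0 < A)
    (hA : IsLUB ((fun f => ‖iteratedDeriv 2 f 0 / 2‖) '' F) A)
    (f : ℂ → ℂ) (hfF : f ∈ F) (c : ℂ) (hc : ‖c‖ = 1 / (2 * A))
    (hom : c ∉ f '' ball (0 : ℂ) 1) :
    ‖iteratedDeriv 2 f 0 / 2‖ = A := by
  obtain ⟨hdf, hinj, hf0, hf1⟩ := hF f hfF
  have hc0 : c ≠ 0 := by
    intro h
    rw [h, norm_zero] at hc
    have : (0:ℝ) < 1 / (2 * A) := by positivity
    linarith
  set g : ℂ → ℂ := fun z => c * f z / (c - f z) with hgdef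
  have hgF : g ∈ F := hclosed f hfF c hom
  have h0mem : (0:ℂ) ∈ ball (0:ℂ) 1 := mem_ball_self one_pos
  have hne0 : ∀ z ∈ ball (0:ℂ) 1, c - f z ≠ 0 := by
    intro z hz h
    exact hom ⟨z, hz, (sub_eq_zero.mp h).symm⟩
  have hfa : AnalyticOnNhd ℂ f (ball 0 1) := hdf.analyticOnNhd isOpen_ball
  have hfa0 : AnalyticAt ℂ f 0 := hfa 0 h0mem
  have hdfa0 : AnalyticAt ℂ (deriv f) 0 := hfa.deriv 0 h0mem
  -- derivative of g on the ball
  have hderiv : ∀ z ∈ ball (0:ℂ) 1,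
      HasDerivAt g (c ^ 2 * deriv f z / (c - f z) ^ 2) z := by
    intro z hz
    have hfz : HasDerivAt f (deriv f z) z := (hfa z hz).differentiableAt.hasDerivAt
    have h1 : HasDerivAt (fun w => c * f w) (c * deriv f z) z := hfz.const_mul c
    have h2 : HasDerivAt (fun w => c - f w) (0 - deriv f z) z :=
      (hasDerivAt_const z c).sub hfz
    have h3 := h1.div h2 (hne0 z hz)
    refine h3.congr_deriv ?_
    field_simp
    ring
  have hev : deriv g =ᶠ[nhds (0:ℂ)] fun z => c ^ 2 * deriv f z / (c - f z) ^ 2 := by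
    filter_upwards [isOpen_ball.mem_nhds h0mem] with z hz
    exact (hderiv z hz).deriv
  -- second derivative of g at 0
  have hf0' : HasDerivAt f 1 0 := by
    rw [← hf1]; exact hfa0.differentiableAt.hasDerivAt
  have hN : HasDerivAt (fun z => c ^ 2 * deriv f z) (c ^ 2 * deriv (deriv f) 0) 0 :=
    hdfa0.differentiableAt.hasDerivAt.const_mul _
  have hD : HasDerivAt (fun z => (c - f z) ^ 2) (-(2 * c)) 0 := by
    have h2 : HasDerivAt (fun w => c - f w) (0 - 1) 0 := (hasDerivAt_const 0 c).sub hf0'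
    have := h2.pow 2
    refine this.congr_deriv ?_
    simp [hf0]
  have hD0 : (c - f 0) ^ 2 ≠ 0 := by
    rw [hf0, sub_zero]
    exact pow_ne_zero 2 hc0
  have hq := hN.div hD hD0
  have hval : (c ^ 2 * deriv (deriv f) 0 * (c - f 0) ^ 2 -
      c ^ 2 * deriv f 0 * -(2 * c)) / ((c - f 0) ^ 2) ^ 2
      = deriv (deriv f) 0 + 2 / c := by
    rw [hf0, hf1, sub_zero]
    field_simp
    ring
  rw [hval] at hq
  have key : iteratedDeriv 2 g 0 = iteratedDeriv 2 f 0 + 2 / c := by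
    rw [iteratedDeriv_succ, iteratedDeriv_one, iteratedDeriv_succ, iteratedDeriv_one]
    rw [hev.deriv_eq]
    exact hq.deriv
  -- inequalities
  have hub : ∀ h ∈ F, ‖iteratedDeriv 2 h 0 / 2‖ ≤ A := fun h hh =>
    hA.1 ⟨h, hh, rfl⟩
  have hfA : ‖iteratedDeriv 2 f 0 / 2‖ ≤ A := hub f hfF
  have hgA : ‖iteratedDeriv 2 g 0 / 2‖ ≤ A := hub g hgF
  have hsplit : iteratedDeriv 2 g 0 / 2 = iteratedDeriv 2 f 0 / 2 + 1 / c := by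
    rw [key]; ring
  have habs1c : ‖1 / c‖ = 2 * A := by
    rw [norm_div, norm_one, hc]
    field_simp
  have h2A : 2 * A ≤ A + ‖iteratedDeriv 2 f 0 / 2‖ := by
    calc 2 * A = ‖1 / c‖ := habs1c.symm
    _ = ‖iteratedDeriv 2 g 0 / 2 - iteratedDeriv 2 f 0 / 2‖ := by
        rw [hsplit]; ring_nf
    _ ≤ ‖iteratedDeriv 2 g 0 / 2‖ + ‖iteratedDeriv 2 f 0 / 2‖ := by
        simpa using norm_sub_le (iteratedDeriv 2 g 0 / 2) (iteratedDeriv 2 f 0 / 2)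
    _ ≤ A + ‖iteratedDeriv 2 f 0 / 2‖ := by
        exact add_le_add_left hgA _
  linarith
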